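/- Let (X, 𝓑, μ, f) be a dissipative system of bounded distortion generated by W, with f bijective and both f and f⁻¹ satisfying condition (⋆), and let 1 ≤ p < ∞. If condition 𝓖𝓗 holds, i.e. limsup_{n→∞} sup_{k≤0} (μ(f^{k−n}(W))/μ(f^k(W)))^{1/n} < 1 and liminf_{n→∞} inf_{k≥0} (μ(f^k(W))/μ(f^{k+n}(W)))^{1/n} > 1, then the composition operator T_f on L^p(X, μ) is generalized hyperbolic; moreover the witnessing splitting is L^p(X, μ) = L_+ ⊕ L_−, where L_+ is the subspace of functions vanishing a.e. on ⋃_{k≥0} f^k(W) and L_− is the subspace of functions vanishing a.e. on ⋃_{k≥1} f^{−k}(W). -/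

import Mathlib

open MeasureTheory Filter Set Function Topology ENNReal

noncomputable section

namespace GHShadow

/-- The shadowing property for an invertible bounded linear operator. -/
def HasShadowing {E : Type*} [NormedAddCommGroup E] [NormedSpace ℝ E]
    (T : E ≃L[ℝ] E) : Prop :=
  ∀ ε : ℝ, 0 < ε → ∃ δ : ℝ, 0 < δ ∧ ∀ x : ℤ → E,
    (∀ n : ℤ, ‖T (x n) - x (n + 1)‖ ≤ δ) →
      ∃ y : E, ∀ n : ℤ, ‖(T ^ n) y - x n‖ < ε

/-- `lim ‖Tⁿ‖^{1/n}` exists and is `< 1`. -/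
def SpectralRadiusLtOne {E : Type*} [NormedAddCommGroup E] [NormedSpace ℝ E]
    (T : E →L[ℝ] E) : Prop :=
  ∃ r : ℝ, r < 1 ∧ Tendsto (fun n : ℕ => ‖T ^ n‖ ^ (1 / (n : ℝ))) atTop (nhds r)

/-- The restriction of `T` to `M` has spectral radius `< 1`
(equivalently, is a proper contraction in an equivalent norm). -/
def ContractsOn {E : Type*} [NormedAddCommGroup E] [NormedSpace ℝ E]
    (T : E ≃L[ℝ] E) (M : Submodule ℝ E) : Prop :=
  ∃ C : ℝ, 0 < C ∧ ∃ t : ℝ, 0 < t ∧ t < 1 ∧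
    ∀ n : ℕ, ∀ x ∈ M, ‖(T ^ n) x‖ ≤ C * t ^ n * ‖x‖

def GeneralizedHyperbolic {E : Type*} [NormedAddCommGroup E] [NormedSpace ℝ E]
    (T : E ≃L[ℝ] E) : Prop :=
  ∃ M N : Submodule ℝ E, IsClosed (M : Set E) ∧ IsClosed (N : Set E) ∧
    IsCompl M N ∧ (∀ x ∈ M, T x ∈ M) ∧ (∀ x ∈ N, T.symm x ∈ N) ∧
    ContractsOn T M ∧ ContractsOn T.symm N

variable {X : Type*} [MeasurableSpace X]

/-- image of `B` under the `k`-th iterate of the invertible map `f`. -/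
def img (f : Equiv.Perm X) (k : ℤ) (B : Set X) : Set X := ⇑(f ^ k) '' B

/-- `(X, 𝓑, μ, f)` is a dissipative system generated by `W`. -/
structure IsDissipative (μ : Measure X) (f : Equiv.Perm X) (W : Set X) : Prop where
  sigmaFin : SigmaFinite μ
  meas_f : Measurable f
  meas_symm : Measurable f.symm
  meas_W : MeasurableSet W
  pos : 0 < μ W
  fin : μ W < ⊤
  disj : Pairwise fun k l : ℤ => Disjoint (img f k W) (img f l W)
  cover : (⋃ k : ℤ, img f k W) = univ

/-- `f` is of bounded distortion on `W` with constant `K`. -/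
def BoundedDistortion (μ : Measure X) (f : Equiv.Perm X) (W : Set X) (K : ℝ≥0∞) : Prop :=
  ∀ k : ℤ, ∀ B : Set X, MeasurableSet B → B ⊆ W →
    (1 / K) * (μ (img f k W) * μ B) ≤ μ (img f k B) * μ W ∧
      μ (img f k B) * μ W ≤ K * (μ (img f k W) * μ B)

/-- condition (⋆) for a transformation `g`. -/
def CondStar (μ : Measure X) (g : X → X) : Prop :=
  ∃ c : ℝ≥0∞, 0 < c ∧ c ≠ ⊤ ∧ ∀ B : Set X, MeasurableSet B → μ (g ⁻¹' B) ≤ c * μ B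

/-- condition 𝓗𝓒. -/
def CondHC (μ : Measure X) (f : Equiv.Perm X) (W : Set X) : Prop :=
  limsup (fun n : ℕ =>
    ⨆ k : ℤ, (μ (img f k W) / μ (img f (k + (n : ℤ)) W)) ^ (1 / (n : ℝ))) atTop < 1

/-- condition 𝓗𝓓. -/
def CondHD (μ : Measure X) (f : Equiv.Perm X) (W : Set X) : Prop :=
  1 < liminf (fun n : ℕ =>
    ⨅ k : ℤ, (μ (img f k W) / μ (img f (k + (n : ℤ)) W)) ^ (1 / (n : ℝ))) atTop

/-- condition 𝓖𝓗. -/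
def CondGH (μ : Measure X) (f : Equiv.Perm X) (W : Set X) : Prop :=
  limsup (fun n : ℕ =>
      ⨆ m : ℕ, (μ (img f (-(m : ℤ) - (n : ℤ)) W) / μ (img f (-(m : ℤ)) W)) ^ (1 / (n : ℝ)))
      atTop < 1 ∧
  1 < liminf (fun n : ℕ =>
      ⨅ m : ℕ, (μ (img f (m : ℤ) W) / μ (img f ((m : ℤ) + (n : ℤ)) W)) ^ (1 / (n : ℝ))) atTop

/-- `T` represents the composition operator `φ ↦ φ ∘ f` on `L^p(X,μ)`. -/
def RepsComp (μ : Measure X) (p : ℝ≥0∞) [Fact (1 ≤ p)] (f : X → X)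
    (T : Lp ℝ p μ ≃L[ℝ] Lp ℝ p μ) : Prop :=
  ∀ φ : Lp ℝ p μ, ⇑(T φ) =ᵐ[μ] fun x => (φ : X → ℝ) (f x)



/-! ### Auxiliary lemmas -/

section Aux

lemma img_eq_preimage (f : Equiv.Perm X) (k : ℤ) (S : Set X) :
    img f k S = ⇑(f ^ (-k)) ⁻¹' S := by
  rw [img, Equiv.image_eq_preimage_symm, zpow_neg]; rfl

lemma img_img (f : Equiv.Perm X) (j k : ℤ) (S : Set X) :
    img f j (img f k S) = img f (j + k) S := by
  simp only [img, ← image_comp]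
  congr 1
  ext x; rw [zpow_add]; rfl

lemma img_zero (f : Equiv.Perm X) (S : Set X) : img f 0 S = S := by
  simp [img]

lemma measurable_perm_zpow (f : Equiv.Perm X) (hf : Measurable f) (hf' : Measurable f.symm)
    (k : ℤ) : Measurable ⇑(f ^ k) := by
  induction k using Int.induction_on with
  | zero => simpa using measurable_id
  | succ n ih =>
      have : ⇑(f ^ ((n : ℤ) + 1)) = ⇑(f ^ (n : ℤ)) ∘ ⇑f := by
        ext x; rw [zpow_add, zpow_one]; rfl
      rw [this]; exact ih.comp hf
  | pred n ih =>
      have : ⇑(f ^ (-(n : ℤ) - 1)) = ⇑(f ^ (-(n : ℤ))) ∘ ⇑f.symm := by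
        ext x
        have : f ^ (-(n:ℤ) - 1) = f ^ (-(n:ℤ)) * f⁻¹ := by
          rw [← zpow_neg_one, ← zpow_add, sub_eq_add_neg]
        rw [this]; rfl
      rw [this]; exact ih.comp hf'

lemma measurableSet_img' {f : Equiv.Perm X} (hf : Measurable f) (hf' : Measurable f.symm)
    (k : ℤ) {S : Set X} (hS : MeasurableSet S) : MeasurableSet (img f k S) := by
  rw [img_eq_preimage]
  exact (measurable_perm_zpow f hf hf' _) hS

lemma CondStar.all_sets {μ : Measure X} {g : X → X}
    (h : CondStar μ g) : ∃ c : ℝ≥0∞, c ≠ ⊤ ∧ ∀ S : Set X, μ (g ⁻¹' S) ≤ c * μ S := by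
  obtain ⟨c, -, hc, hle⟩ := h
  refine ⟨c, hc, fun S => ?_⟩
  calc μ (g ⁻¹' S) ≤ μ (g ⁻¹' toMeasurable μ S) :=
        measure_mono (preimage_mono (subset_toMeasurable μ S))
    _ ≤ c * μ (toMeasurable μ S) := hle _ (measurableSet_toMeasurable μ S)
    _ = c * μ S := by rw [measure_toMeasurable]

lemma star_zpow {μ : Measure X} {f : Equiv.Perm X}
    (hstar : CondStar μ ⇑f) (hstar' : CondStar μ ⇑f.symm) (k : ℤ) :
    ∃ c : ℝ≥0∞, c ≠ ⊤ ∧ ∀ S : Set X, μ (⇑(f ^ k) ⁻¹' S) ≤ c * μ S := by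
  obtain ⟨c, hc, hle⟩ := hstar.all_sets
  obtain ⟨c', hc', hle'⟩ := hstar'.all_sets
  induction k using Int.induction_on with
  | zero => exact ⟨1, one_ne_top, fun S => by simp⟩
  | succ n ih =>
      obtain ⟨d, hd, hdle⟩ := ih
      refine ⟨c * d, ENNReal.mul_ne_top hc hd, fun S => ?_⟩
      have : ⇑(f ^ ((n : ℤ) + 1)) ⁻¹' S = ⇑f ⁻¹' (⇑(f ^ (n : ℤ)) ⁻¹' S) := by
        ext x; simp only [mem_preimage]
        rw [zpow_add, zpow_one]; rfl
      rw [this, mul_assoc]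
      exact le_trans (hle _) (mul_le_mul_right (hdle S) c)
  | pred n ih =>
      obtain ⟨d, hd, hdle⟩ := ih
      refine ⟨c' * d, ENNReal.mul_ne_top hc' hd, fun S => ?_⟩
      have : ⇑(f ^ (-(n : ℤ) - 1)) ⁻¹' S = ⇑f.symm ⁻¹' (⇑(f ^ (-(n : ℤ))) ⁻¹' S) := by
        ext x; simp only [mem_preimage]
        have : f ^ (-(n:ℤ) - 1) = f ^ (-(n:ℤ)) * f⁻¹ := by
          rw [← zpow_neg_one, ← zpow_add, sub_eq_add_neg]
        rw [this]; rfl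
      rw [this, mul_assoc]
      exact le_trans (hle' _) (mul_le_mul_right (hdle S) c')

lemma null_preimage_zpow {μ : Measure X} {f : Equiv.Perm X}
    (hstar : CondStar μ ⇑f) (hstar' : CondStar μ ⇑f.symm) (k : ℤ)
    {S : Set X} (hS : μ S = 0) : μ (⇑(f ^ k) ⁻¹' S) = 0 := by
  obtain ⟨c, hc, hle⟩ := star_zpow hstar hstar' k
  exact le_antisymm (by simpa [hS] using hle S) zero_le

lemma rpow_inv_le_iff {x r : ℝ≥0∞} {n : ℕ} (hn : 1 ≤ n) (h : x ^ (1 / (n : ℝ)) ≤ r) :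
    x ≤ r ^ n := by
  have hn0 : (n : ℝ) ≠ 0 := Nat.cast_ne_zero.mpr (by omega)
  have := ENNReal.rpow_le_rpow h (le_of_lt (by positivity : (0:ℝ) < (n:ℝ)))
  rwa [← ENNReal.rpow_mul, one_div, inv_mul_cancel₀ hn0,
    ENNReal.rpow_one, ENNReal.rpow_natCast] at this

lemma geom_of_limsup_lt {a : ℕ → ℕ → ℝ≥0∞} {b : ℕ → ℝ≥0∞} (hb : ∀ m, b m ≠ ⊤)
    (h : limsup (fun n : ℕ => ⨆ m : ℕ, (a m n / b m) ^ (1 / (n : ℝ))) atTop < 1) :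
    ∃ r : ℝ≥0∞, r < 1 ∧ ∃ N : ℕ, 1 ≤ N ∧ ∀ n, N ≤ n → ∀ m, a m n ≤ r ^ n * b m := by
  obtain ⟨r, hr1, hr2⟩ := exists_between h
  have hev : ∀ᶠ n in atTop, (⨆ m : ℕ, (a m n / b m) ^ (1 / (n : ℝ))) < r :=
    Filter.eventually_lt_of_limsup_lt hr1
  obtain ⟨N₀, hN₀⟩ := (hev.and (eventually_ge_atTop 1)).exists_forall_of_atTop
  refine ⟨r, hr2, N₀ + 1, le_add_self, fun n hn m => ?_⟩
  have hn' := hN₀ n (le_trans (Nat.le_succ N₀) hn)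
  have h1 : (a m n / b m) ^ (1 / (n : ℝ)) ≤ r :=
    le_of_lt (lt_of_le_of_lt (le_iSup (fun m => (a m n / b m) ^ (1 / (n : ℝ))) m) hn'.1)
  have h2 : a m n / b m ≤ r ^ n := rpow_inv_le_iff hn'.2 h1
  rcases eq_or_ne (b m) 0 with hb0 | hb0
  · rcases eq_or_ne (a m n) 0 with ha0 | ha0
    · simp [ha0]
    · exfalso
      rw [hb0, ENNReal.div_zero ha0] at h2
      exact (lt_irrefl _ (lt_of_le_of_lt (le_trans h2 (pow_le_one' hr2.le n)) one_lt_top)).elim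
  · rwa [ENNReal.div_le_iff hb0 (hb m)] at h2

lemma geom_of_lt_liminf {a : ℕ → ℕ → ℝ≥0∞} {b : ℕ → ℝ≥0∞}
    (h : 1 < liminf (fun n : ℕ => ⨅ m : ℕ, (b m / a m n) ^ (1 / (n : ℝ))) atTop) :
    ∃ r : ℝ≥0∞, r < 1 ∧ ∃ N : ℕ, 1 ≤ N ∧ ∀ n, N ≤ n → ∀ m, a m n ≤ r ^ n * b m := by
  obtain ⟨s, hs1, hs2⟩ := exists_between h
  have hstop : s ≠ ⊤ := by
    intro hst
    exact (lt_irrefl _ (lt_of_le_of_lt (hst ▸ le_top) hs2)).elim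
  have hs0 : s ≠ 0 := by
    intro hs0; rw [hs0] at hs1; exact (not_lt_of_ge zero_le) hs1
  have hev : ∀ᶠ n in atTop, s < ⨅ m : ℕ, (b m / a m n) ^ (1 / (n : ℝ)) :=
    Filter.eventually_lt_of_lt_liminf hs2
  obtain ⟨N₀, hN₀⟩ := (hev.and (eventually_ge_atTop 1)).exists_forall_of_atTop
  refine ⟨s⁻¹, ENNReal.inv_lt_one.mpr hs1, N₀ + 1, le_add_self, fun n hn m => ?_⟩
  have hn' := hN₀ n (le_trans (Nat.le_succ N₀) hn)
  have h1 : s ≤ (b m / a m n) ^ (1 / (n : ℝ)) :=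
    le_trans hn'.1.le (iInf_le (fun m => (b m / a m n) ^ (1 / (n : ℝ))) m)
  have hnn : 1 ≤ n := hn'.2
  have hn0 : (n : ℝ) ≠ 0 := Nat.cast_ne_zero.mpr (by omega)
  have h2 : s ^ n ≤ b m / a m n := by
    have := ENNReal.rpow_le_rpow h1 (le_of_lt (by positivity : (0:ℝ) < (n:ℝ)))
    rwa [← ENNReal.rpow_mul, one_div, inv_mul_cancel₀ hn0,
      ENNReal.rpow_one, ENNReal.rpow_natCast] at this
  rcases eq_or_ne (a m n) 0 with ha0 | ha0
  · simp [ha0]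
  rcases eq_or_ne (a m n) ⊤ with hat | hat
  · exfalso
    rw [hat, ENNReal.div_top] at h2
    have : s ^ n = 0 := le_antisymm h2 zero_le
    exact (pow_ne_zero n hs0) this
  have h3 : s ^ n * a m n ≤ b m := by
    rw [← ENNReal.le_div_iff_mul_le (Or.inl ha0) (Or.inl hat)]
    exact h2
  calc a m n = (s⁻¹) ^ n * (s ^ n * a m n) := by
        rw [← mul_assoc, ← mul_pow, ENNReal.inv_mul_cancel hs0 hstop, one_pow, one_mul]
    _ ≤ (s⁻¹) ^ n * b m := mul_le_mul_right h3 _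

section Core
variable {μ : Measure X} {f : Equiv.Perm X} {W : Set X} {K : ℝ≥0∞}
variable (hf : Measurable f) (hf' : Measurable f.symm) (hW : MeasurableSet W)
  (hWpos : 0 < μ W) (hWfin : μ W < ⊤) (hfinW : ∀ m : ℤ, μ (img f m W) ≠ ⊤)
  (hK0 : 0 < K) (hKfin : K ≠ ⊤) (hbd : BoundedDistortion μ f W K)

include hWpos hWfin hfinW hK0 hKfin hbd hf hf' in
lemma distortion_transport (j k : ℤ) {E : Set X} (hE : MeasurableSet E)
    (hEsub : E ⊆ img f k W) :
    μ (img f j E) * μ (img f k W) ≤ K ^ 2 * (μ (img f (j + k) W) * μ E) := by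
  set B := img f (-k) E with hB
  have hBW : B ⊆ W := by
    rw [hB]
    calc img f (-k) E ⊆ img f (-k) (img f k W) := image_mono hEsub
      _ = W := by rw [img_img, neg_add_cancel, img_zero]
  have hBmeas : MeasurableSet B := measurableSet_img' hf hf' _ hE
  have hEB : img f k B = E := by rw [hB, img_img, add_neg_cancel, img_zero]
  have hjE : img f j E = img f (j + k) B := by rw [← hEB, img_img]
  have hKne : K ≠ 0 := hK0.ne'
  have h1 : μ (img f (j + k) B) * μ W ≤ K * (μ (img f (j + k) W) * μ B) :=
    (hbd (j + k) B hBmeas hBW).2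
  have h2 : μ (img f k W) * μ B ≤ K * (μ E * μ W) := by
    have := (hbd k B hBmeas hBW).1
    rw [hEB] at this
    calc μ (img f k W) * μ B = K * ((1 / K) * (μ (img f k W) * μ B)) := by
          rw [← mul_assoc, one_div, ENNReal.mul_inv_cancel hKne hKfin, one_mul]
      _ ≤ K * (μ E * μ W) := mul_le_mul_right this K
  rcases eq_or_ne (μ B) 0 with hB0 | hB0
  · have hE0 : μ E = 0 := by
      have := (hbd k B hBmeas hBW).2
      rw [hEB, hB0, mul_zero, mul_zero] at this
      have := le_antisymm this zero_le
      rcases mul_eq_zero.mp this with h | h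
      · exact h
      · exact absurd h hWpos.ne'
    have hjE0 : μ (img f j E) = 0 := by
      have := h1
      rw [hB0, mul_zero, mul_zero] at this
      have h0 := le_antisymm this zero_le
      rw [← hjE] at h0
      rcases mul_eq_zero.mp h0 with h | h
      · exact h
      · exact absurd h hWpos.ne'
    simp [hE0, hjE0]
  · have hBfin : μ B ≠ ⊤ := (lt_of_le_of_lt (measure_mono hBW) hWfin).ne
    have hc0 : μ W * μ B ≠ 0 := mul_ne_zero hWpos.ne' hB0
    have hcfin : μ W * μ B ≠ ⊤ := ENNReal.mul_ne_top hWfin.ne hBfin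
    rw [← ENNReal.mul_le_mul_iff_left hc0 hcfin]
    calc μ (img f j E) * μ (img f k W) * (μ W * μ B)
        = (μ (img f (j + k) B) * μ W) * (μ (img f k W) * μ B) := by rw [hjE]; ring
      _ ≤ (K * (μ (img f (j + k) W) * μ B)) * (K * (μ E * μ W)) := mul_le_mul' h1 h2
      _ = K ^ 2 * (μ (img f (j + k) W) * μ E) * (μ W * μ B) := by ring

include hW hWpos hWfin hfinW hK0 hKfin hbd hf hf' in
lemma measure_img_le (σ : ℕ → ℤ) (hσ : Function.Injective σ)
    (hdisj : Pairwise fun k l : ℤ => Disjoint (img f k W) (img f l W))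
    (j : ℤ) {r : ℝ≥0∞}
    (hdecay : ∀ m : ℕ, μ (img f (j + σ m) W) ≤ r * μ (img f (σ m) W))
    {S : Set X} (hSmeas : MeasurableSet S) (hSsub : S ⊆ ⋃ m : ℕ, img f (σ m) W) :
    μ (img f j S) ≤ K ^ 2 * r * μ S := by
  set E : ℕ → Set X := fun m => S ∩ img f (σ m) W with hE
  have hEmeas : ∀ m, MeasurableSet (E m) := fun m =>
    hSmeas.inter (measurableSet_img' hf hf' _ hW)
  have hEdisj : Pairwise (Function.onFun Disjoint E) := fun m m' hne =>
    Disjoint.mono inter_subset_right inter_subset_right (hdisj (fun h => hne (hσ h)))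
  have hS : S = ⋃ m, E m := by
    rw [hE, ← inter_iUnion, inter_eq_left.mpr hSsub]
  have hpiece : ∀ m, μ (img f j (E m)) ≤ K ^ 2 * r * μ (E m) := by
    intro m
    have hmain := distortion_transport hf hf' hWpos hWfin hfinW hK0 hKfin hbd j (σ m)
      (hEmeas m) (inter_subset_right)
    have hmain2 : μ (img f j (E m)) * μ (img f (σ m) W) ≤
        (K ^ 2 * r * μ (E m)) * μ (img f (σ m) W) := by
      refine le_trans hmain ?_
      calc K ^ 2 * (μ (img f (j + σ m) W) * μ (E m))
          ≤ K ^ 2 * ((r * μ (img f (σ m) W)) * μ (E m)) := by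
            exact mul_le_mul_right (mul_le_mul_left (hdecay m) _) _
        _ = (K ^ 2 * r * μ (E m)) * μ (img f (σ m) W) := by ring
    rcases eq_or_ne (μ (img f (σ m) W)) 0 with h0 | h0
    · have : μ (img f j (E m)) = 0 := by
        have hsub : img f j (E m) ⊆ img f (j + σ m) W := by
          calc img f j (E m) ⊆ img f j (img f (σ m) W) := image_mono inter_subset_right
            _ = img f (j + σ m) W := img_img f _ _ _
        have := le_trans (measure_mono hsub) (hdecay m)
        rw [h0, mul_zero] at this
        exact le_antisymm this zero_le
      simp [this]
    · rwa [ENNReal.mul_le_mul_iff_left h0 (hfinW _)] at hmain2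
  calc μ (img f j S) = μ (⋃ m, img f j (E m)) := by rw [hS, img, image_iUnion]; rfl
    _ ≤ ∑' m, μ (img f j (E m)) := measure_iUnion_le _
    _ ≤ ∑' m, K ^ 2 * r * μ (E m) := ENNReal.tsum_le_tsum hpiece
    _ = K ^ 2 * r * ∑' m, μ (E m) := ENNReal.tsum_mul_left
    _ = K ^ 2 * r * μ S := by rw [hS, measure_iUnion hEdisj hEmeas]

end Core

section LpAux
variable {μ : Measure X} {p : ℝ≥0∞} [Fact (1 ≤ p)]

lemma p_ne_zero : p ≠ 0 := fun h => by
  have h1 : (1:ℝ≥0∞) ≤ p := Fact.out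
  rw [h] at h1; exact (not_le_of_gt zero_lt_one) h1

/-- The submodule of `Lp` functions vanishing a.e. on `A`. -/
def vanishSub (μ : Measure X) (p : ℝ≥0∞) [Fact (1 ≤ p)] (A : Set X) :
    Submodule ℝ (Lp ℝ p μ) where
  carrier := {φ : Lp ℝ p μ | ∀ᵐ x ∂μ, x ∈ A → (φ : X → ℝ) x = 0}
  zero_mem' := by
    simp only [Set.mem_setOf_eq]
    filter_upwards [Lp.coeFn_zero ℝ p μ] with x hx _
    simpa using hx
  add_mem' := fun {φ ψ} hφ hψ => by
    simp only [Set.mem_setOf_eq] at hφ hψ ⊢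
    filter_upwards [Lp.coeFn_add φ ψ, hφ, hψ] with x hx h1 h2 hxA
    rw [hx, Pi.add_apply, h1 hxA, h2 hxA, add_zero]
  smul_mem' := fun c {φ} hφ => by
    simp only [Set.mem_setOf_eq] at hφ ⊢
    filter_upwards [Lp.coeFn_smul c φ, hφ] with x hx h1 hxA
    rw [hx, Pi.smul_apply, h1 hxA, smul_zero]

lemma mem_vanishSub {A : Set X} {φ : Lp ℝ p μ} :
    φ ∈ vanishSub μ p A ↔ (∀ᵐ x ∂μ, x ∈ A → (φ : X → ℝ) x = 0) := Iff.rfl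

lemma coe_vanishSub (A : Set X) :
    ((vanishSub μ p A : Submodule ℝ (Lp ℝ p μ)) : Set (Lp ℝ p μ)) =
      {φ : Lp ℝ p μ | ∀ᵐ x ∂μ, x ∈ A → (φ : X → ℝ) x = 0} := rfl

lemma mem_vanishSub_iff {A : Set X} (hA : MeasurableSet A) (φ : Lp ℝ p μ) :
    φ ∈ vanishSub μ p A ↔ eLpNorm (A.indicator ⇑φ) p μ = 0 := by
  have hiff : (A.indicator ⇑φ =ᵐ[μ] 0) ↔ (∀ᵐ x ∂μ, x ∈ A → (φ : X → ℝ) x = 0) := by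
    constructor
    · intro h; filter_upwards [h] with x hx hxA
      rwa [Set.indicator_of_mem hxA] at hx
    · intro h; filter_upwards [h] with x hx
      by_cases hxA : x ∈ A
      · rw [Set.indicator_of_mem hxA]; exact hx hxA
      · simp [Set.indicator_of_notMem hxA]
  rw [eLpNorm_eq_zero_iff ((Lp.aestronglyMeasurable φ).indicator hA) p_ne_zero]
  exact (Iff.trans hiff Iff.rfl).symm

lemma lipschitz_vanish_norm {A : Set X} (hA : MeasurableSet A) :
    LipschitzWith 1 (fun φ : Lp ℝ p μ => (eLpNorm (A.indicator ⇑φ) p μ).toReal) := by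
  have key : ∀ φ ψ : Lp ℝ p μ,
      (eLpNorm (A.indicator ⇑φ) p μ).toReal
        ≤ (eLpNorm (A.indicator ⇑ψ) p μ).toReal + ‖φ - ψ‖ := by
    intro φ ψ
    have h1 : A.indicator ⇑φ =ᵐ[μ] A.indicator ⇑ψ + A.indicator ⇑(φ - ψ) := by
      filter_upwards [Lp.coeFn_sub φ ψ] with x hx
      by_cases hxA : x ∈ A
      · simp only [Pi.add_apply, Set.indicator_of_mem hxA, hx, Pi.sub_apply]; ring
      · simp [Set.indicator_of_notMem hxA]
    have h2 : eLpNorm (A.indicator ⇑φ) p μ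
        ≤ eLpNorm (A.indicator ⇑ψ) p μ + eLpNorm (A.indicator ⇑(φ - ψ)) p μ := by
      rw [eLpNorm_congr_ae h1]
      exact eLpNorm_add_le ((Lp.aestronglyMeasurable ψ).indicator hA)
        ((Lp.aestronglyMeasurable (φ - ψ)).indicator hA) Fact.out
    have h3 : eLpNorm (A.indicator ⇑(φ - ψ)) p μ ≤ eLpNorm ⇑(φ - ψ) p μ :=
      eLpNorm_indicator_le _
    have hfin1 : eLpNorm (A.indicator ⇑ψ) p μ ≠ ⊤ :=
      (lt_of_le_of_lt (eLpNorm_indicator_le _) (Lp.eLpNorm_lt_top ψ)).ne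
    have hfin2 : eLpNorm ⇑(φ - ψ) p μ ≠ ⊤ := (Lp.eLpNorm_lt_top _).ne
    calc (eLpNorm (A.indicator ⇑φ) p μ).toReal
        ≤ ((eLpNorm (A.indicator ⇑ψ) p μ) + eLpNorm ⇑(φ - ψ) p μ).toReal := by
          apply ENNReal.toReal_mono (ENNReal.add_ne_top.mpr ⟨hfin1, hfin2⟩)
          exact le_trans h2 (add_le_add le_rfl h3)
      _ = (eLpNorm (A.indicator ⇑ψ) p μ).toReal + ‖φ - ψ‖ := by
          rw [ENNReal.toReal_add hfin1 hfin2, Lp.norm_def]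
  apply LipschitzWith.of_dist_le_mul
  intro φ ψ
  rw [Real.dist_eq, NNReal.coe_one, one_mul, dist_eq_norm]
  rw [abs_sub_le_iff]
  constructor
  · linarith [key φ ψ]
  · have h := key ψ φ
    have h2 : ‖ψ - φ‖ = ‖φ - ψ‖ := norm_sub_rev ψ φ
    linarith

lemma isClosed_vanishSub {A : Set X} (hA : MeasurableSet A) :
    IsClosed ((vanishSub μ p A : Submodule ℝ (Lp ℝ p μ)) : Set (Lp ℝ p μ)) := by
  have : ((vanishSub μ p A : Submodule ℝ (Lp ℝ p μ)) : Set (Lp ℝ p μ)) =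
      (fun φ : Lp ℝ p μ => (eLpNorm (A.indicator ⇑φ) p μ).toReal) ⁻¹' {0} := by
    ext φ
    simp only [SetLike.mem_coe, mem_preimage, mem_singleton_iff]
    rw [mem_vanishSub_iff hA]
    constructor
    · intro h; simp [h]
    · intro h
      have hfin : eLpNorm (A.indicator ⇑φ) p μ ≠ ⊤ :=
        (lt_of_le_of_lt (eLpNorm_indicator_le _) (Lp.eLpNorm_lt_top φ)).ne
      exact (ENNReal.toReal_eq_zero_iff _).mp h |>.resolve_right hfin
  rw [this]
  exact IsClosed.preimage (lipschitz_vanish_norm hA).continuous isClosed_singleton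

lemma isCompl_vanishSub {A : Set X} (hA : MeasurableSet A) :
    IsCompl (vanishSub μ p A) (vanishSub μ p Aᶜ) := by
  constructor
  · rw [Submodule.disjoint_def]
    intro φ h1 h2
    rw [mem_vanishSub] at h1 h2
    have hz : (φ : X → ℝ) =ᵐ[μ] ⇑(0 : Lp ℝ p μ) := by
      filter_upwards [h1, h2, Lp.coeFn_zero ℝ p μ] with x hx1 hx2 hx0
      rw [hx0]
      by_cases hxA : x ∈ A
      · exact hx1 hxA
      · exact hx2 hxA
    exact Lp.ext hz
  · rw [codisjoint_iff, eq_top_iff]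
    intro φ _
    have hφ := Lp.memLp φ
    set ψA : Lp ℝ p μ := (hφ.indicator hA).toLp (A.indicator ⇑φ) with hψA
    set ψB : Lp ℝ p μ := (hφ.indicator hA.compl).toLp (Aᶜ.indicator ⇑φ) with hψB
    refine Submodule.mem_sup.mpr ⟨ψB, ?_, ψA, ?_, ?_⟩
    · rw [mem_vanishSub]
      have h0 : ⇑ψB =ᵐ[μ] Aᶜ.indicator ⇑φ := MemLp.coeFn_toLp _
      filter_upwards [h0] with x hx hxA
      rw [hx, Set.indicator_of_notMem (by simp [hxA])]
    · rw [mem_vanishSub]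
      have h0 : ⇑ψA =ᵐ[μ] A.indicator ⇑φ := MemLp.coeFn_toLp _
      filter_upwards [h0] with x hx hxA
      rw [hx, Set.indicator_of_notMem (by simpa using hxA)]
    · refine (Lp.ext ?_).symm
      have hB0 : ⇑ψB =ᵐ[μ] Aᶜ.indicator ⇑φ := MemLp.coeFn_toLp _
      have hA0 : ⇑ψA =ᵐ[μ] A.indicator ⇑φ := MemLp.coeFn_toLp _
      filter_upwards [Lp.coeFn_add ψB ψA, hB0,
        hA0] with x hadd hB' hA'
      rw [hadd, Pi.add_apply, hB', hA']
      have := congrFun (Set.indicator_self_add_compl A (⇑φ)) x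
      rw [Pi.add_apply] at this
      rw [add_comm]
      exact this.symm

lemma ae_comp_of_null_preimage {g : X → X} (hg : ∀ S : Set X, μ S = 0 → μ (g ⁻¹' S) = 0)
    {h₁ h₂ : X → ℝ} (h : h₁ =ᵐ[μ] h₂) : (fun x => h₁ (g x)) =ᵐ[μ] fun x => h₂ (g x) := by
  have hnull : μ {y | h₁ y ≠ h₂ y} = 0 := h
  have hsub : {x | h₁ (g x) ≠ h₂ (g x)} ⊆ g ⁻¹' {y | h₁ y ≠ h₂ y} := fun x hx => hx
  exact measure_mono_null hsub (hg _ hnull)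

variable {f : Equiv.Perm X} {T : Lp ℝ p μ ≃L[ℝ] Lp ℝ p μ}

lemma repsComp_symm (hT : RepsComp μ p f T)
    (hnull' : ∀ S : Set X, μ S = 0 → μ (⇑f.symm ⁻¹' S) = 0) (φ : Lp ℝ p μ) :
    ⇑(T.symm φ) =ᵐ[μ] fun x => (φ : X → ℝ) (f.symm x) := by
  have h1 : ⇑(T (T.symm φ)) =ᵐ[μ] fun x => (T.symm φ : X → ℝ) (f x) := hT (T.symm φ)
  rw [T.apply_symm_apply] at h1
  have h2 := ae_comp_of_null_preimage hnull' h1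
  refine (EventuallyEq.symm ?_).trans (EventuallyEq.refl _ _)
  filter_upwards [h2] with x hx
  simpa [Equiv.apply_symm_apply] using hx

lemma repsComp_pow (hT : RepsComp μ p f T)
    (hnullz : ∀ k : ℤ, ∀ S : Set X, μ S = 0 → μ (⇑(f ^ k) ⁻¹' S) = 0) :
    ∀ n : ℕ, ∀ φ : Lp ℝ p μ,
      ⇑((T ^ n) φ) =ᵐ[μ] fun x => (φ : X → ℝ) (⇑(f ^ (n : ℤ)) x) := by
  intro n
  induction n with
  | zero =>
      intro φ
      simp only [pow_zero, zpow_zero]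
      have : ((1 : Lp ℝ p μ ≃L[ℝ] Lp ℝ p μ)) φ = φ := rfl
      rw [this]
      exact EventuallyEq.refl _ _
  | succ n ih =>
      intro φ
      have hpow : (T ^ (n + 1)) φ = (T ^ n) (T φ) := by rw [pow_succ]; rfl
      rw [hpow]
      have h1 := ih (T φ)
      have h2 := ae_comp_of_null_preimage (hnullz (n : ℤ)) (hT φ)
      have h3 : (fun x => (φ : X → ℝ) (f (⇑(f ^ (n : ℤ)) x)))
          =ᵐ[μ] fun x => (φ : X → ℝ) (⇑(f ^ ((n + 1 : ℕ) : ℤ)) x) := by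
        apply Eventually.of_forall
        intro x
        have h4 : f ^ (((n : ℕ) + 1 : ℤ)) = f * f ^ (n : ℤ) := by
          rw [add_comm, zpow_add, zpow_one]
        have h5 : f (⇑(f ^ (n : ℤ)) x) = ⇑(f ^ ((n : ℕ) + 1 : ℤ)) x := by rw [h4]; rfl
        show (φ : X → ℝ) (f (⇑(f ^ (n : ℤ)) x)) = (φ : X → ℝ) (⇑(f ^ ((n + 1 : ℕ) : ℤ)) x)
        rw [h5]
        norm_cast
      exact h1.trans (h2.trans h3)

lemma repsComp_symm_pow (hT : RepsComp μ p f T)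
    (hnull' : ∀ S : Set X, μ S = 0 → μ (⇑f.symm ⁻¹' S) = 0)
    (hnullz : ∀ k : ℤ, ∀ S : Set X, μ S = 0 → μ (⇑(f ^ k) ⁻¹' S) = 0) :
    ∀ n : ℕ, ∀ φ : Lp ℝ p μ,
      ⇑((T.symm ^ n) φ) =ᵐ[μ] fun x => (φ : X → ℝ) (⇑(f ^ (-(n : ℤ))) x) := by
  intro n
  induction n with
  | zero =>
      intro φ
      simp only [pow_zero, neg_zero, zpow_zero]
      exact EventuallyEq.refl _ _
  | succ n ih =>
      intro φ
      have hpow : (T.symm ^ (n + 1)) φ = (T.symm ^ n) (T.symm φ) := by rw [pow_succ]; rfl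
      rw [hpow]
      have h1 := ih (T.symm φ)
      have h2 := ae_comp_of_null_preimage (hnullz (-(n : ℤ)))
          (repsComp_symm hT hnull' φ)
      have h3 : (fun x => (φ : X → ℝ) (f.symm (⇑(f ^ (-(n : ℤ))) x)))
          =ᵐ[μ] fun x => (φ : X → ℝ) (⇑(f ^ (-((n + 1 : ℕ) : ℤ))) x) := by
        apply Eventually.of_forall
        intro x
        have h4 : f ^ (-((n : ℕ) + 1 : ℤ)) = f⁻¹ * f ^ (-(n : ℤ)) := by
          rw [neg_add, add_comm, zpow_add, zpow_neg_one]
        have h5 : f.symm (⇑(f ^ (-(n : ℤ))) x) = ⇑(f ^ (-((n : ℕ) + 1 : ℤ))) x := by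
          rw [h4]; rfl
        show (φ : X → ℝ) (f.symm (⇑(f ^ (-(n : ℤ))) x))
          = (φ : X → ℝ) (⇑(f ^ (-((n + 1 : ℕ) : ℤ))) x)
        rw [h5]
        norm_cast
      exact h1.trans (h2.trans h3)

lemma contraction_estimate (hp : p ≠ ⊤) {g : X → X} (hg : Measurable g)
    {Bset : Set X} (hB : MeasurableSet Bset) {c : ℝ≥0∞}
    (hbound : ∀ S : Set X, MeasurableSet S → S ⊆ Bset → μ (g ⁻¹' S) ≤ c * μ S)
    (hnullg : ∀ S : Set X, μ S = 0 → μ (g ⁻¹' S) = 0)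
    {φ : Lp ℝ p μ} (hφ : ∀ᵐ x ∂μ, x ∉ Bset → (φ : X → ℝ) x = 0) :
    eLpNorm (fun x => (φ : X → ℝ) (g x)) p μ
      ≤ c ^ (1 / p.toReal) * eLpNorm ⇑φ p μ := by
  have hp0 : p ≠ 0 := p_ne_zero
  set p' := p.toReal with hp'def
  have hp'pos : 0 < p' := ENNReal.toReal_pos hp0 hp
  set h : X → ℝ≥0∞ := fun y => (‖(φ : X → ℝ) y‖₊ : ℝ≥0∞) ^ p' with hdef
  have hφmeas : Measurable (φ : X → ℝ) := (Lp.stronglyMeasurable φ).measurable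
  have hhmeas : Measurable h :=
    ENNReal.continuous_rpow_const.measurable.comp hφmeas.nnnorm.coe_nnreal_ennreal
  set ν := μ.map g with hν
  have hcov : ∫⁻ x, h (g x) ∂μ = ∫⁻ y, h y ∂ν := (lintegral_map hhmeas hg).symm
  set D := Bsetᶜ ∩ {y | (φ : X → ℝ) y ≠ 0} with hD
  have hDmeas : MeasurableSet D :=
    hB.compl.inter (hφmeas (measurableSet_singleton 0)).compl
  have hDnull : μ D = 0 := by
    have hsub : D ⊆ {x | ¬ (x ∉ Bset → (φ : X → ℝ) x = 0)} := by
      intro x hx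
      simp only [mem_setOf_eq, Classical.not_imp]
      exact ⟨hx.1, hx.2⟩
    exact measure_mono_null hsub (ae_iff.mp hφ)
  have hνDnull : ν D = 0 := by
    rw [hν, Measure.map_apply hg hDmeas]
    exact hnullg D hDnull
  have hae : h =ᵐ[ν] Bset.indicator h := by
    have hsub : {y | h y ≠ Bset.indicator h y} ⊆ D := by
      intro y hy
      simp only [mem_setOf_eq] at hy
      by_cases hyB : y ∈ Bset
      · rw [Set.indicator_of_mem hyB] at hy; exact absurd rfl hy
      · refine ⟨hyB, fun h0 => hy ?_⟩
        rw [Set.indicator_of_notMem hyB, hdef]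
        simp only [h0]
        simp [ENNReal.zero_rpow_of_pos hp'pos]
    exact measure_mono_null hsub hνDnull
  have hle : ν.restrict Bset ≤ c • μ := by
    rw [Measure.le_iff]
    intro s hs
    rw [Measure.restrict_apply hs, hν, Measure.map_apply hg (hs.inter hB)]
    calc μ (g ⁻¹' (s ∩ Bset)) ≤ c * μ (s ∩ Bset) :=
          hbound _ (hs.inter hB) inter_subset_right
      _ ≤ c * μ s := mul_le_mul_right (measure_mono inter_subset_left) c
      _ = (c • μ) s := by rw [Measure.smul_apply, smul_eq_mul]
  have hint : ∫⁻ x, h (g x) ∂μ ≤ c * ∫⁻ y, h y ∂μ := by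
    calc ∫⁻ x, h (g x) ∂μ = ∫⁻ y, h y ∂ν := hcov
      _ = ∫⁻ y, Bset.indicator h y ∂ν := lintegral_congr_ae hae
      _ = ∫⁻ y, h y ∂(ν.restrict Bset) := by
          rw [lintegral_indicator hB]
      _ ≤ ∫⁻ y, h y ∂(c • μ) := lintegral_mono' hle le_rfl
      _ = c * ∫⁻ y, h y ∂μ := lintegral_smul_measure c h
  rw [eLpNorm_eq_lintegral_rpow_enorm_toReal hp0 hp, eLpNorm_eq_lintegral_rpow_enorm_toReal hp0 hp]
  calc (∫⁻ x, (‖(φ : X → ℝ) (g x)‖₊ : ℝ≥0∞) ^ p' ∂μ) ^ (1 / p')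
      ≤ (c * ∫⁻ y, h y ∂μ) ^ (1 / p') :=
        ENNReal.rpow_le_rpow hint (by positivity)
    _ = c ^ (1 / p') * (∫⁻ y, h y ∂μ) ^ (1 / p') :=
        ENNReal.mul_rpow_of_nonneg _ _ (by positivity)

lemma final_norm_bound (hp : p ≠ ⊤)
    {K r : ℝ≥0∞} (hKfin : K ≠ ⊤) (hrfin : r ≠ ⊤) (n : ℕ) (φ ψ : Lp ℝ p μ)
    (h : eLpNorm ⇑ψ p μ ≤ (K ^ 2 * r ^ n) ^ (1 / p.toReal) * eLpNorm ⇑φ p μ) :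
    ‖ψ‖ ≤ ((K ^ 2) ^ (1 / p.toReal)).toReal * ((r ^ (1 / p.toReal)).toReal) ^ n * ‖φ‖ := by
  have hexp : (0:ℝ) ≤ 1 / p.toReal := by positivity
  have hsplit : (K ^ 2 * r ^ n) ^ (1 / p.toReal)
      = (K ^ 2) ^ (1 / p.toReal) * (r ^ (1 / p.toReal)) ^ n := by
    rw [ENNReal.mul_rpow_of_nonneg _ _ hexp]
    congr 1
    rw [← ENNReal.rpow_natCast r n, ← ENNReal.rpow_mul,
        ← ENNReal.rpow_natCast (r ^ (1 / p.toReal)) n, ← ENNReal.rpow_mul, mul_comm]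
  have h1 : (K ^ 2) ^ (1 / p.toReal) ≠ ⊤ :=
    ENNReal.rpow_ne_top_of_nonneg hexp (ENNReal.pow_ne_top hKfin)
  have h2 : (r ^ (1 / p.toReal)) ^ n ≠ ⊤ :=
    ENNReal.pow_ne_top (ENNReal.rpow_ne_top_of_nonneg hexp hrfin)
  have h3 : eLpNorm ⇑φ p μ ≠ ⊤ := (Lp.eLpNorm_lt_top φ).ne
  rw [hsplit] at h
  rw [Lp.norm_def, Lp.norm_def]
  calc (eLpNorm ⇑ψ p μ).toReal
      ≤ ((K ^ 2) ^ (1 / p.toReal) * (r ^ (1 / p.toReal)) ^ n * eLpNorm ⇑φ p μ).toReal := by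
        apply ENNReal.toReal_mono (ENNReal.mul_ne_top (ENNReal.mul_ne_top h1 h2) h3)
        exact h
    _ = ((K ^ 2) ^ (1 / p.toReal)).toReal * ((r ^ (1 / p.toReal)).toReal) ^ n
          * (eLpNorm ⇑φ p μ).toReal := by
        rw [ENNReal.toReal_mul, ENNReal.toReal_mul, ENNReal.toReal_pow]

end LpAux

lemma contractsOn_of_eventually {E : Type*} [NormedAddCommGroup E] [NormedSpace ℝ E]
    (T : E ≃L[ℝ] E) (M : Submodule ℝ E) (CK t₀ : ℝ) (hCK : 0 ≤ CK)
    (ht₀ : 0 ≤ t₀) (ht₁ : t₀ < 1) (N : ℕ)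
    (hbig : ∀ n, N ≤ n → ∀ φ ∈ M, ‖(T ^ n) φ‖ ≤ CK * t₀ ^ n * ‖φ‖) :
    ContractsOn T M := by
  set CT : ℝ := max 1 ‖(T : E →L[ℝ] E)‖ with hCT
  have hCT1 : 1 ≤ CT := le_max_left _ _
  have hTn : ∀ n : ℕ, ∀ φ : E, ‖(T ^ n) φ‖ ≤ CT ^ n * ‖φ‖ := by
    intro n
    induction n with
    | zero =>
        intro φ
        have h0 : (T ^ 0) φ = φ := rfl
        rw [h0, pow_zero, one_mul]
    | succ n ih =>
        intro φ
        have h1 : (T ^ (n + 1)) φ = T ((T ^ n) φ) := by rw [pow_succ']; rfl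
        rw [h1]
        calc ‖T ((T ^ n) φ)‖ ≤ ‖(T : E →L[ℝ] E)‖ * ‖(T ^ n) φ‖ :=
              (T : E →L[ℝ] E).le_opNorm _
          _ ≤ CT * (CT ^ n * ‖φ‖) := by
              apply mul_le_mul (le_max_right _ _) (ih φ) (norm_nonneg _)
              linarith
          _ = CT ^ (n + 1) * ‖φ‖ := by ring
  set t : ℝ := max t₀ (1 / 2) with ht
  have htpos : 0 < t := lt_of_lt_of_le (by norm_num) (le_max_right _ _)
  have htlt : t < 1 := max_lt ht₁ (by norm_num)
  have htN : (0:ℝ) < t ^ N := pow_pos htpos N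
  have hDnn : 0 ≤ max CK (CT ^ N / t ^ N) :=
    le_trans (le_of_lt (div_pos (pow_pos (by linarith) N) htN)) (le_max_right _ _)
  refine ⟨max CK (CT ^ N / t ^ N) + 1, by linarith, t, htpos, htlt, fun n φ hφ => ?_⟩
  have hCK_le : CK ≤ max CK (CT ^ N / t ^ N) + 1 := by
    have := le_max_left CK (CT ^ N / t ^ N); linarith
  have hD_le : CT ^ N / t ^ N ≤ max CK (CT ^ N / t ^ N) + 1 := by
    have := le_max_right CK (CT ^ N / t ^ N); linarith
  have hCpos : (0:ℝ) < max CK (CT ^ N / t ^ N) + 1 := by linarith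
  rcases le_or_gt N n with hn | hn
  · calc ‖(T ^ n) φ‖ ≤ CK * t₀ ^ n * ‖φ‖ := hbig n hn φ hφ
      _ ≤ (max CK (CT ^ N / t ^ N) + 1) * t ^ n * ‖φ‖ := by
          have h1 : t₀ ^ n ≤ t ^ n := pow_le_pow_left₀ ht₀ (le_max_left _ _) n
          have h3 : (0:ℝ) ≤ t ^ n := le_of_lt (pow_pos htpos n)
          have := mul_le_mul (mul_le_mul hCK_le h1 (pow_nonneg ht₀ n) (le_of_lt hCpos))
            (le_refl ‖φ‖) (norm_nonneg φ) (by positivity)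
          linarith
  · calc ‖(T ^ n) φ‖ ≤ CT ^ n * ‖φ‖ := hTn n φ
      _ ≤ (max CK (CT ^ N / t ^ N) + 1) * t ^ n * ‖φ‖ := by
          have h1 : CT ^ n ≤ CT ^ N := pow_le_pow_right₀ (by linarith) (le_of_lt hn)
          have h2 : t ^ N ≤ t ^ n := pow_le_pow_of_le_one (le_of_lt htpos)
            (le_of_lt htlt) (le_of_lt hn)
          have h3 : CT ^ N = (CT ^ N / t ^ N) * t ^ N := (div_mul_cancel₀ _ htN.ne').symm
          have h5 : CT ^ n ≤ (max CK (CT ^ N / t ^ N) + 1) * t ^ n := by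
            calc CT ^ n ≤ CT ^ N := h1
              _ = (CT ^ N / t ^ N) * t ^ N := h3
              _ ≤ (max CK (CT ^ N / t ^ N) + 1) * t ^ n :=
                  mul_le_mul hD_le h2 (le_of_lt htN) (le_of_lt hCpos)
          exact mul_le_mul_of_nonneg_right h5 (norm_nonneg φ)

end Aux

/-- Theorem SS, part 3: if condition 𝓖𝓗 holds, then the composition
operator `T_f` on `L^p(X,μ)` is generalized hyperbolic, and the witnessing splitting is
`L^p = L_+ ⊕ L_-`, where `L_+` consists of the functions vanishing a.e. on
`⋃_{k≥0} f^k(W)` and `L_-` of the functions vanishing a.e. on `⋃_{k≥1} f^{-k}(W)`. -/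
theorem generalizedHyperbolic_of_condGH
    {X : Type*} [MeasurableSpace X] (μ : Measure X) (f : Equiv.Perm X) (W : Set X)
    (p : ℝ≥0∞) [Fact (1 ≤ p)] (hp : p ≠ ⊤)
    (hdiss : IsDissipative μ f W)
    (K : ℝ≥0∞) (hK0 : 0 < K) (hKfin : K ≠ ⊤)
    (hbd : BoundedDistortion μ f W K)
    (hstar : CondStar μ f) (hstar' : CondStar μ f.symm)
    (T : Lp ℝ p μ ≃L[ℝ] Lp ℝ p μ) (hT : RepsComp μ p f T)
    (hGH : CondGH μ f W) :
    GeneralizedHyperbolic T ∧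
      ∃ M N : Submodule ℝ (Lp ℝ p μ),
        IsClosed (M : Set (Lp ℝ p μ)) ∧ IsClosed (N : Set (Lp ℝ p μ)) ∧ IsCompl M N ∧
        (M : Set (Lp ℝ p μ)) =
          {φ : Lp ℝ p μ | ∀ᵐ x ∂μ, x ∈ (⋃ k : ℕ, img f (k : ℤ) W) → (φ : X → ℝ) x = 0} ∧
        (N : Set (Lp ℝ p μ)) =
          {φ : Lp ℝ p μ | ∀ᵐ x ∂μ, x ∈ (⋃ k : ℕ, img f (-(k : ℤ) - 1) W) → (φ : X → ℝ) x = 0} ∧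
        (∀ φ ∈ M, T φ ∈ M) ∧ (∀ φ ∈ N, T.symm φ ∈ N) ∧
        ContractsOn T M ∧ ContractsOn T.symm N := by
  classical
  obtain ⟨hσfin, hf, hf', hW, hWpos, hWfin, hdisj, hcover⟩ := hdiss
  set A : Set X := ⋃ k : ℕ, img f (k : ℤ) W with hA
  set B : Set X := ⋃ k : ℕ, img f (-(k : ℤ) - 1) W with hB
  have hfinW : ∀ m : ℤ, μ (img f m W) ≠ ⊤ := by
    intro m
    rw [img_eq_preimage]
    obtain ⟨c, hc, hle⟩ := star_zpow hstar hstar' (-m)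
    exact (lt_of_le_of_lt (hle W) (ENNReal.mul_lt_top hc.lt_top hWfin)).ne
  have hnullz : ∀ k : ℤ, ∀ S : Set X, μ S = 0 → μ (⇑(f ^ k) ⁻¹' S) = 0 :=
    fun k S hS => null_preimage_zpow hstar hstar' k hS
  have hnull' : ∀ S : Set X, μ S = 0 → μ (⇑f.symm ⁻¹' S) = 0 := by
    intro S hS
    have h1 := hnullz (-1) S hS
    have h2 : ⇑(f ^ (-1 : ℤ)) = ⇑f.symm := by rw [zpow_neg_one]; rfl
    rwa [h2] at h1
  have hAmeas : MeasurableSet A := by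
    rw [hA]; exact MeasurableSet.iUnion fun k => measurableSet_img' hf hf' _ hW
  have hBmeas : MeasurableSet B := by
    rw [hB]; exact MeasurableSet.iUnion fun k => measurableSet_img' hf hf' _ hW
  have hBA : B = Aᶜ := by
    rw [hA, hB]
    ext x
    simp only [mem_compl_iff, mem_iUnion]
    constructor
    · rintro ⟨k, hk⟩ ⟨j, hj⟩
      have hne : (-(k : ℤ) - 1) ≠ (j : ℤ) := by omega
      exact Set.disjoint_left.mp (hdisj hne) hk hj
    · intro hnotA
      have hx : x ∈ ⋃ k : ℤ, img f k W := hcover.symm ▸ mem_univ x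
      obtain ⟨k, hk⟩ := mem_iUnion.mp hx
      rcases le_or_gt 0 k with hk0 | hk0
      · exact absurd ⟨k.toNat, by rwa [Int.toNat_of_nonneg hk0]⟩ hnotA
      · refine ⟨(-k - 1).toNat, ?_⟩
        have heq : (-(((-k - 1).toNat : ℤ)) - 1) = k := by
          rw [Int.toNat_of_nonneg (by omega)]; ring
        rwa [heq]
  -- invariance of the generating sets
  have hfA : ∀ x ∈ A, f x ∈ A := by
    intro x hx
    rw [hA] at hx ⊢
    obtain ⟨k, hk⟩ := mem_iUnion.mp hx
    obtain ⟨w, hw, rfl⟩ := hk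
    refine mem_iUnion.mpr ⟨k + 1, ⟨w, hw, ?_⟩⟩
    have h1 : f ^ (((k + 1 : ℕ)) : ℤ) = f * f ^ (k : ℤ) := by
      push_cast
      rw [add_comm, zpow_add, zpow_one]
    rw [h1]; rfl
  have hfB : ∀ x ∈ B, f.symm x ∈ B := by
    intro x hx
    rw [hB] at hx ⊢
    obtain ⟨k, hk⟩ := mem_iUnion.mp hx
    obtain ⟨w, hw, rfl⟩ := hk
    refine mem_iUnion.mpr ⟨k + 1, ⟨w, hw, ?_⟩⟩
    have h1 : f ^ (-((k + 1 : ℕ) : ℤ) - 1) = f⁻¹ * f ^ (-(k : ℤ) - 1) := by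
      rw [← zpow_neg_one, ← zpow_add]
      congr 1
      push_cast
      ring
    rw [h1]; rfl
  -- invariance of the submodules
  have hMinv : ∀ φ ∈ vanishSub μ p A, T φ ∈ vanishSub μ p A := by
    intro φ hφ
    rw [mem_vanishSub] at hφ ⊢
    have hZ : μ {y | y ∈ A ∧ (φ : X → ℝ) y ≠ 0} = 0 := by
      have hset : {y | y ∈ A ∧ (φ : X → ℝ) y ≠ 0}
          = {x | ¬ (x ∈ A → (φ : X → ℝ) x = 0)} := by
        ext y; simp [Classical.not_imp]
      rw [hset]
      exact ae_iff.mp hφ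
    have hZ' : μ (⇑f ⁻¹' {y | y ∈ A ∧ (φ : X → ℝ) y ≠ 0}) = 0 := by
      have h1 := hnullz 1 _ hZ
      rwa [zpow_one] at h1
    filter_upwards [hT φ, measure_eq_zero_iff_ae_notMem.mp hZ'] with x hx1 hx2 hxA
    rw [hx1]
    by_contra hne
    exact hx2 ⟨hfA x hxA, hne⟩
  have hNinv : ∀ φ ∈ vanishSub μ p B, T.symm φ ∈ vanishSub μ p B := by
    intro φ hφ
    rw [mem_vanishSub] at hφ ⊢
    have hZ : μ {y | y ∈ B ∧ (φ : X → ℝ) y ≠ 0} = 0 := by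
      have hset : {y | y ∈ B ∧ (φ : X → ℝ) y ≠ 0}
          = {x | ¬ (x ∈ B → (φ : X → ℝ) x = 0)} := by
        ext y; simp [Classical.not_imp]
      rw [hset]
      exact ae_iff.mp hφ
    have hZ' : μ (⇑f.symm ⁻¹' {y | y ∈ B ∧ (φ : X → ℝ) y ≠ 0}) = 0 := hnull' _ hZ
    filter_upwards [repsComp_symm hT hnull' φ, measure_eq_zero_iff_ae_notMem.mp hZ']
      with x hx1 hx2 hxB
    rw [hx1]
    by_contra hne
    exact hx2 ⟨hfB x hxB, hne⟩
  -- decay rates from condition 𝓖𝓗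
  obtain ⟨r₁, hr₁lt, N₁, hN₁, hdec₁⟩ :=
    geom_of_limsup_lt (a := fun m n => μ (img f (-(m : ℤ) - (n : ℤ)) W))
      (b := fun m => μ (img f (-(m : ℤ)) W)) (fun m => hfinW _) hGH.1
  obtain ⟨r₂, hr₂lt, N₂, hN₂, hdec₂⟩ :=
    geom_of_lt_liminf (a := fun m n => μ (img f ((m : ℤ) + (n : ℤ)) W))
      (b := fun m => μ (img f (m : ℤ) W)) hGH.2
  have hp'pos : (0:ℝ) < p.toReal := ENNReal.toReal_pos p_ne_zero hp
  have hexp : (0:ℝ) < 1 / p.toReal := by positivity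
  have hr₁fin : r₁ ≠ ⊤ := (hr₁lt.trans ENNReal.one_lt_top).ne
  have hr₂fin : r₂ ≠ ⊤ := (hr₂lt.trans ENNReal.one_lt_top).ne
  have ht₁lt : (r₁ ^ (1 / p.toReal)).toReal < 1 := by
    have h1 : r₁ ^ (1 / p.toReal) < 1 := ENNReal.rpow_lt_one hr₁lt hexp
    rw [← ENNReal.toReal_one]
    exact (ENNReal.toReal_lt_toReal (ENNReal.rpow_ne_top_of_nonneg hexp.le hr₁fin)
      ENNReal.one_ne_top).mpr h1
  have ht₂lt : (r₂ ^ (1 / p.toReal)).toReal < 1 := by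
    have h1 : r₂ ^ (1 / p.toReal) < 1 := ENNReal.rpow_lt_one hr₂lt hexp
    rw [← ENNReal.toReal_one]
    exact (ENNReal.toReal_lt_toReal (ENNReal.rpow_ne_top_of_nonneg hexp.le hr₂fin)
      ENNReal.one_ne_top).mpr h1
  -- contraction estimate for T on vanishSub μ p A
  have hbig1 : ∀ n, N₁ ≤ n → ∀ φ ∈ vanishSub μ p A,
      ‖(T ^ n) φ‖ ≤ ((K ^ 2) ^ (1 / p.toReal)).toReal
        * ((r₁ ^ (1 / p.toReal)).toReal) ^ n * ‖φ‖ := by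
    intro n hn φ hφ
    have hφ' : ∀ᵐ x ∂μ, x ∉ B → (φ : X → ℝ) x = 0 := by
      filter_upwards [mem_vanishSub.mp hφ] with x hx hxB
      apply hx
      rw [hBA] at hxB
      simpa using hxB
    have hσinj : Function.Injective (fun m : ℕ => -(m : ℤ) - 1) := by
      intro a b hab
      simp only at hab
      omega
    have hbound : ∀ S : Set X, MeasurableSet S → S ⊆ B →
        μ (⇑(f ^ (n : ℤ)) ⁻¹' S) ≤ (K ^ 2 * r₁ ^ n) * μ S := by
      intro S hS hSB
      have hpre : ⇑(f ^ (n : ℤ)) ⁻¹' S = img f (-(n : ℤ)) S := by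
        rw [img_eq_preimage, neg_neg]
      rw [hpre, mul_assoc]
      have hdecayσ : ∀ m : ℕ,
          μ (img f (-(n : ℤ) + (-(m : ℤ) - 1)) W) ≤ r₁ ^ n * μ (img f (-(m : ℤ) - 1) W) := by
        intro m
        have hidx : -(n : ℤ) + (-(m : ℤ) - 1) = -(((m + 1 : ℕ)) : ℤ) - (n : ℤ) := by
          push_cast; ring
        have hidx2 : -(m : ℤ) - 1 = -(((m + 1 : ℕ)) : ℤ) := by push_cast; ring
        rw [hidx, hidx2]
        exact hdec₁ n hn (m + 1)
      have := measure_img_le hf hf' hW hWpos hWfin hfinW hK0 hKfin hbd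
        (fun m : ℕ => -(m : ℤ) - 1) hσinj hdisj (-(n : ℤ)) hdecayσ hS (hB ▸ hSB)
      rwa [mul_assoc] at this
    have hest := contraction_estimate hp (measurable_perm_zpow f hf hf' (n : ℤ))
      hBmeas hbound (hnullz (n : ℤ)) hφ'
    refine final_norm_bound hp hKfin hr₁fin n φ ((T ^ n) φ) ?_
    rw [eLpNorm_congr_ae (repsComp_pow hT hnullz n φ)]
    exact hest
  have hcontr₁ : ContractsOn T (vanishSub μ p A) :=
    contractsOn_of_eventually T _ _ _ ENNReal.toReal_nonneg ENNReal.toReal_nonneg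
      ht₁lt N₁ hbig1
  -- contraction estimate for T.symm on vanishSub μ p B
  have hbig2 : ∀ n, N₂ ≤ n → ∀ φ ∈ vanishSub μ p B,
      ‖(T.symm ^ n) φ‖ ≤ ((K ^ 2) ^ (1 / p.toReal)).toReal
        * ((r₂ ^ (1 / p.toReal)).toReal) ^ n * ‖φ‖ := by
    intro n hn φ hφ
    have hφ' : ∀ᵐ x ∂μ, x ∉ A → (φ : X → ℝ) x = 0 := by
      filter_upwards [mem_vanishSub.mp hφ] with x hx hxA
      apply hx
      rw [hBA]
      simpa using hxA
    have hσinj : Function.Injective (fun m : ℕ => (m : ℤ)) := fun a b hab => by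
      simpa using hab
    have hbound : ∀ S : Set X, MeasurableSet S → S ⊆ A →
        μ (⇑(f ^ (-(n : ℤ))) ⁻¹' S) ≤ (K ^ 2 * r₂ ^ n) * μ S := by
      intro S hS hSA
      have hpre : ⇑(f ^ (-(n : ℤ))) ⁻¹' S = img f (n : ℤ) S :=
        (img_eq_preimage f (n : ℤ) S).symm
      rw [hpre, mul_assoc]
      have hdecayσ : ∀ m : ℕ,
          μ (img f ((n : ℤ) + (m : ℤ)) W) ≤ r₂ ^ n * μ (img f (m : ℤ) W) := by
        intro m
        rw [add_comm]
        exact hdec₂ n hn m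
      have := measure_img_le hf hf' hW hWpos hWfin hfinW hK0 hKfin hbd
        (fun m : ℕ => (m : ℤ)) hσinj hdisj (n : ℤ) hdecayσ hS (hA ▸ hSA)
      rwa [mul_assoc] at this
    have hest := contraction_estimate hp (measurable_perm_zpow f hf hf' (-(n : ℤ)))
      hAmeas hbound (hnullz (-(n : ℤ))) hφ'
    refine final_norm_bound hp hKfin hr₂fin n φ ((T.symm ^ n) φ) ?_
    rw [eLpNorm_congr_ae (repsComp_symm_pow hT hnull' hnullz n φ)]
    exact hest
  have hcontr₂ : ContractsOn T.symm (vanishSub μ p B) :=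
    contractsOn_of_eventually T.symm _ _ _ ENNReal.toReal_nonneg ENNReal.toReal_nonneg
      ht₂lt N₂ hbig2
  have hcompl : IsCompl (vanishSub μ p A) (vanishSub μ p B) := by
    have := isCompl_vanishSub (μ := μ) (p := p) hAmeas
    rwa [← hBA] at this
  refine ⟨⟨vanishSub μ p A, vanishSub μ p B, isClosed_vanishSub hAmeas,
      isClosed_vanishSub hBmeas, hcompl, hMinv, hNinv, hcontr₁, hcontr₂⟩,
    vanishSub μ p A, vanishSub μ p B, isClosed_vanishSub hAmeas,
      isClosed_vanishSub hBmeas, hcompl, rfl, rfl, hMinv, hNinv, hcontr₁, hcontr₂⟩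


end GHShadow
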